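/- arXiv:2202.09052 — 3 statements merged into one kernel-verified Lean document; each statement's English description precedes it below -/
import Mathlib

section
/- Suppose f = g + h where g is μ-PL with infimum g⋆, and h satisfies |h(x)| ≤ B₁ and ‖∇h(x)‖² ≤ B₂ for all x. Then for any two stationary points x, y of f, |f(x) − f(y)| ≤ 2B₁ + B₂/(2μ). -/
open InnerProductSpace

lemma grad_add_aux {d : ℕ} (g h : EuclideanSpace ℝ (Fin d) → ℝ)
    (hdg : Differentiable ℝ g) (hdh : Differentiable ℝ h) (z : EuclideanSpace ℝ (Fin d)) :
    gradient (fun x => g x + h x) z = gradient g z + gradient h z := by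
  unfold gradient
  rw [fderiv_fun_add (hdg z) (hdh z), map_add]

/-- If `f = g + h` with `g` `μ`-PL with infimum `gstar`, `|h| ≤ B₁` and `‖∇h‖² ≤ B₂`,
then for any two stationary points `x, y` of `f`, `|f x − f y| ≤ 2B₁ + B₂/(2μ)`. -/
theorem stmt_6 {d : ℕ} (f g h : EuclideanSpace ℝ (Fin d) → ℝ) (μ B₁ B₂ gstar : ℝ)
    (hμ : 0 < μ) (hB₁ : 0 ≤ B₁) (hB₂ : 0 ≤ B₂)
    (hf : f = fun x => g x + h x)
    (hdg : Differentiable ℝ g) (hdh : Differentiable ℝ h)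
    (hgstar : gstar = ⨅ x, g x)
    (hlb : ∀ x, gstar ≤ g x)
    (hpl : ∀ x, 2 * μ * (g x - gstar) ≤ ‖gradient g x‖ ^ 2)
    (hbdd : ∀ x, |h x| ≤ B₁)
    (hgrad : ∀ x, ‖gradient h x‖ ^ 2 ≤ B₂)
    (x y : EuclideanSpace ℝ (Fin d))
    (hx : gradient f x = 0) (hy : gradient f y = 0) :
    |f x - f y| ≤ 2 * B₁ + B₂ / (2 * μ) := by
  have key : ∀ z : EuclideanSpace ℝ (Fin d), gradient f z = 0 →
      g z - gstar ≤ B₂ / (2 * μ) := by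
    intro z hz
    have hgz : gradient g z = - gradient h z := by
      have := grad_add_aux g h hdg hdh z
      rw [← hf, hz] at this
      have h2 : gradient g z + gradient h z = 0 := this.symm
      exact eq_neg_of_add_eq_zero_left h2
    have h1 : ‖gradient g z‖ ^ 2 ≤ B₂ := by
      rw [hgz, norm_neg]; exact hgrad z
    have := (hpl z).trans h1
    rw [le_div_iff₀ (by positivity)]
    linarith
  have hx' := key x hx
  have hy' := key y hy
  have hbx := abs_le.mp (hbdd x)
  have hby := abs_le.mp (hbdd y)
  have hlx := hlb x
  have hly := hlb y
  rw [hf]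
  simp only
  rw [abs_le]
  constructor <;> nlinarith
end

section
/- For f(x) = x² + a·x·sin(bx) smoothed with Gaussian noise N(0, ζ²): the smoothed function equals f_ζ(x) = x² + ζ² + a·e^{−b²ζ²/2}(bζ²·cos(bx) + x·sin(bx)). -/
open MeasureTheory ProbabilityTheory Real
open scoped NNReal


lemma odd_integral_zero (f : ℝ → ℝ) (hodd : ∀ x, f (-x) = - f x) :
    ∫ x, f x = 0 := by
  have h : ∫ x : ℝ, f (-x) = ∫ x, f x := integral_neg_eq_self f volume
  simp_rw [hodd, integral_neg] at h
  linarith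

lemma integral_cos_mul_gaussian {c : ℝ} (hc : 0 < c) (t : ℝ) :
    ∫ x : ℝ, Real.cos (t * x) * Real.exp (-c * x ^ 2) =
      Real.sqrt (π / c) * Real.exp (-t ^ 2 / (4 * c)) := by
  have hre : (0:ℝ) < (c:ℂ).re := by simpa using hc
  have h := fourierIntegral_gaussian hre (t : ℂ)
  have hint : Integrable fun x : ℝ =>
      Complex.exp (Complex.I * t * x) * Complex.exp (-(c:ℂ) * x ^ 2) := by
    have h2 := integrable_cexp_quadratic hre (Complex.I * t) 0
    refine h2.congr (Filter.Eventually.of_forall fun x => ?_)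
    simp only [← Complex.exp_add]
    ring_nf
  have hre2 := integral_re hint
  simp only [RCLike.re_to_complex] at hre2
  have hL : ∫ x : ℝ, Real.cos (t*x) * Real.exp (-c * x^2) =
      (∫ x : ℝ, Complex.exp (Complex.I * t * x) * Complex.exp (-(c:ℂ) * x ^ 2)).re := by
    rw [← hre2]
    congr 1; ext x
    rw [← Complex.exp_add, Complex.exp_re]
    simp [Complex.add_re, Complex.mul_re, Complex.mul_im, Complex.add_im,
      ← Complex.ofReal_pow]
    ring_nf
  rw [hL, h]
  have h1 : ((π:ℂ) / (c:ℂ)) ^ (1/2 : ℂ) = ((π/c : ℝ) ^ ((1:ℝ)/2) : ℝ) := by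
    rw [← Complex.ofReal_div, show (1/2 : ℂ) = (((1:ℝ)/2 : ℝ) : ℂ) by norm_num,
      ← Complex.ofReal_cpow (by positivity)]
  have h2 : (-(t:ℂ) ^ 2 / (4 * (c:ℂ))) = ((-t^2/(4*c) : ℝ) : ℂ) := by push_cast; ring
  rw [h1, h2, ← Complex.ofReal_exp, ← Complex.ofReal_mul, Complex.ofReal_re,
    Real.sqrt_eq_rpow]

lemma integrable_sq_mul_gaussian {c : ℝ} (hc : 0 < c) :
    Integrable fun x : ℝ => x ^ 2 * Real.exp (-c * x ^ 2) := by
  refine (integrable_rpow_mul_exp_neg_mul_sq hc (by norm_num : (-1:ℝ) < 2)).congr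
    (Filter.Eventually.of_forall fun x => ?_)
  norm_cast

lemma integral_sq_mul_gaussian {c : ℝ} (hc : 0 < c) :
    ∫ x : ℝ, x ^ 2 * Real.exp (-c * x ^ 2) = (2*c)⁻¹ * Real.sqrt (π / c) := by
  have ie := integrable_exp_neg_mul_sq hc
  have ix2 := integrable_sq_mul_gaussian hc
  have hd : ∀ x : ℝ, HasDerivAt (fun x : ℝ => x * Real.exp (-c * x ^ 2))
      (Real.exp (-c * x ^ 2) - 2*c*(x^2 * Real.exp (-c * x ^ 2))) x := by
    intro x
    have hexp : HasDerivAt (fun x : ℝ => Real.exp (-c * x ^ 2))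
        (Real.exp (-c * x ^ 2) * (-c * (2 * x))) x := by
      have h1 : HasDerivAt (fun x : ℝ => -c * x ^ 2) (-c * (2 * x)) x := by
        have := (hasDerivAt_pow 2 x).const_mul (-c)
        simpa using this
      exact h1.exp
    have := (hasDerivAt_id' x).fun_mul hexp
    refine this.congr_deriv ?_
    simp; ring
  have hz := integral_eq_zero_of_hasDerivAt_of_integrable hd
    (ie.sub (ix2.const_mul (2*c))) (integrable_mul_exp_neg_mul_sq hc)
  rw [integral_sub ie (ix2.const_mul (2*c)), integral_const_mul, integral_gaussian] at hz
  have h2c : (2*c) ≠ 0 := by positivity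
  field_simp at hz ⊢
  linarith

lemma integral_mul_sin_mul_gaussian {c : ℝ} (hc : 0 < c) (t : ℝ) :
    ∫ x : ℝ, Real.sin (t * x) * (x * Real.exp (-c * x ^ 2)) =
      t / (2*c) * (Real.sqrt (π / c) * Real.exp (-t ^ 2 / (4 * c))) := by
  have ie := integrable_exp_neg_mul_sq hc
  have ixe := integrable_mul_exp_neg_mul_sq hc
  have icos : Integrable fun x : ℝ => Real.cos (t * x) * Real.exp (-c * x ^ 2) :=
    ie.bdd_mul ((Real.continuous_cos.comp (continuous_const.mul continuous_id)).aestronglyMeasurable)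
      (c := 1) (Filter.Eventually.of_forall fun x => by rw [Real.norm_eq_abs]; exact Real.abs_cos_le_one _)
  have ixsin : Integrable fun x : ℝ => Real.sin (t * x) * (x * Real.exp (-c * x ^ 2)) :=
    ixe.bdd_mul ((Real.continuous_sin.comp (continuous_const.mul continuous_id)).aestronglyMeasurable)
      (c := 1) (Filter.Eventually.of_forall fun x => by rw [Real.norm_eq_abs]; exact Real.abs_sin_le_one _)
  have hd : ∀ x : ℝ, HasDerivAt (fun x : ℝ => Real.sin (t * x) * Real.exp (-c * x ^ 2))
      (t * (Real.cos (t * x) * Real.exp (-c * x ^ 2))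
        - 2*c*(Real.sin (t * x) * (x * Real.exp (-c * x ^ 2)))) x := by
    intro x
    have hexp : HasDerivAt (fun x : ℝ => Real.exp (-c * x ^ 2))
        (Real.exp (-c * x ^ 2) * (-c * (2 * x))) x := by
      have h1 : HasDerivAt (fun x : ℝ => -c * x ^ 2) (-c * (2 * x)) x := by
        have := (hasDerivAt_pow 2 x).const_mul (-c)
        simpa using this
      exact h1.exp
    have hsin : HasDerivAt (fun x : ℝ => Real.sin (t * x)) (Real.cos (t * x) * t) x := by
      have h1 : HasDerivAt (fun x : ℝ => t * x) t x := by
        simpa using (hasDerivAt_id x).const_mul t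
      exact h1.sin
    have := hsin.fun_mul hexp
    refine this.congr_deriv ?_
    ring
  have hz := integral_eq_zero_of_hasDerivAt_of_integrable hd
    ((icos.const_mul t).sub (ixsin.const_mul (2*c)))
    (ie.bdd_mul ((Real.continuous_sin.comp (continuous_const.mul continuous_id)).aestronglyMeasurable)
      (c := 1) (Filter.Eventually.of_forall fun x => by rw [Real.norm_eq_abs]; exact Real.abs_sin_le_one _))
  rw [integral_sub (icos.const_mul t) (ixsin.const_mul (2*c)), integral_const_mul,
    integral_const_mul, integral_cos_mul_gaussian hc t] at hz
  have h2c : (2*c) ≠ 0 := by positivity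
  field_simp at hz ⊢
  linarith
/-- Gaussian smoothing of `f(x) = x² + a·x·sin(bx)` with `N(0, ζ²)` noise equals
`x² + ζ² + a·e^{−b²ζ²/2}(bζ²·cos(bx) + x·sin(bx))`. -/
theorem stmt_12 (a b : ℝ) (ha : 0 < a) (hb : 0 < b) (ζ : ℝ≥0) :
    ∀ x : ℝ,
      (∫ u, ((x - u) ^ 2 + a * (x - u) * Real.sin (b * (x - u)))
          ∂(gaussianReal 0 (ζ ^ 2))) =
        x ^ 2 + (ζ : ℝ) ^ 2 +
          a * Real.exp (-(b ^ 2 * (ζ : ℝ) ^ 2) / 2) *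
            (b * (ζ : ℝ) ^ 2 * Real.cos (b * x) + x * Real.sin (b * x)) := by
  intro x
  by_cases hζ : ζ = 0
  · subst hζ
    simp only [NNReal.coe_zero, ne_eq, OfNat.ofNat_ne_zero, not_false_eq_true, zero_pow,
      pow_eq_zero_iff, gaussianReal_zero_var, integral_dirac]
    norm_num
    ring
  · have hζ' : (0:ℝ) < (ζ:ℝ) := by positivity
    set V : ℝ := (ζ:ℝ)^2 with hV
    have hVpos : 0 < V := by positivity
    set c : ℝ := (2*V)⁻¹ with hcdef
    have hc : 0 < c := by positivity
    have hv2 : (ζ^2 : ℝ≥0) ≠ 0 := pow_ne_zero 2 hζ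
    rw [gaussianReal_of_var_ne_zero _ hv2]
    have hmeas : Measurable fun u : ℝ => (gaussianPDFReal 0 (ζ^2) u).toNNReal :=
      (measurable_gaussianPDFReal 0 (ζ^2)).real_toNNReal
    rw [show gaussianPDF 0 (ζ^2) = (fun u => ((gaussianPDFReal 0 (ζ^2) u).toNNReal : ENNReal))
        from rfl,
      integral_withDensity_eq_integral_smul hmeas]
    simp_rw [NNReal.smul_def]
    have hco : ∀ u : ℝ, ((gaussianPDFReal 0 (ζ^2) u).toNNReal : ℝ) = gaussianPDFReal 0 (ζ^2) u :=
      fun u => Real.coe_toNNReal _ (gaussianPDFReal_pos 0 (ζ^2) u hv2).le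
    simp_rw [hco, smul_eq_mul]
    have hpdf : ∀ u : ℝ, gaussianPDFReal 0 (ζ^2) u
        = (Real.sqrt (2*π*V))⁻¹ * Real.exp (-c * u^2) := by
      intro u
      rw [gaussianPDFReal]
      have hco2 : ((ζ^2 : ℝ≥0) : ℝ) = V := by push_cast; rfl
      rw [hco2]
      congr 1
      rw [hcdef]
      field_simp
      rw [sub_zero]
    set C : ℝ := (Real.sqrt (2*π*V))⁻¹ with hC
    have key : ∀ u : ℝ,
        gaussianPDFReal 0 (ζ^2) u *
            ((x - u) ^ 2 + a * (x - u) * Real.sin (b * (x - u)))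
          = C * (x^2 * Real.exp (-c*u^2)
            + (-(2*x)) * (u * Real.exp (-c*u^2))
            + u^2 * Real.exp (-c*u^2)
            + (a*x*Real.sin (b*x)) * (Real.cos (b*u) * Real.exp (-c*u^2))
            + (-(a*x*Real.cos (b*x))) * (Real.sin (b*u) * Real.exp (-c*u^2))
            + (-(a*Real.sin (b*x))) * (Real.cos (b*u) * (u * Real.exp (-c*u^2)))
            + (a*Real.cos (b*x)) * (Real.sin (b*u) * (u * Real.exp (-c*u^2)))) := by
      intro u
      rw [hpdf u, show b*(x-u) = b*x - b*u by ring, Real.sin_sub]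
      ring
    rw [integral_congr_ae (Filter.Eventually.of_forall key)]
    have ie := integrable_exp_neg_mul_sq hc
    have ixe := integrable_mul_exp_neg_mul_sq hc
    have ix2 := integrable_sq_mul_gaussian hc
    have msin : AEStronglyMeasurable (fun u : ℝ => Real.sin (b*u)) volume :=
      (Real.continuous_sin.comp (continuous_const.mul continuous_id)).aestronglyMeasurable
    have mcos : AEStronglyMeasurable (fun u : ℝ => Real.cos (b*u)) volume :=
      (Real.continuous_cos.comp (continuous_const.mul continuous_id)).aestronglyMeasurable
    have bsin : ∃ M, ∀ u : ℝ, ‖Real.sin (b*u)‖ ≤ M :=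
      ⟨1, fun u => by rw [Real.norm_eq_abs]; exact Real.abs_sin_le_one _⟩
    have bcos : ∃ M, ∀ u : ℝ, ‖Real.cos (b*u)‖ ≤ M :=
      ⟨1, fun u => by rw [Real.norm_eq_abs]; exact Real.abs_cos_le_one _⟩
    have icos := ie.bdd_mul mcos (Filter.Eventually.of_forall bcos.choose_spec)
    have isin := ie.bdd_mul msin (Filter.Eventually.of_forall bsin.choose_spec)
    have ixcos := ixe.bdd_mul mcos (Filter.Eventually.of_forall bcos.choose_spec)
    have ixsin := ixe.bdd_mul msin (Filter.Eventually.of_forall bsin.choose_spec)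
    have i1 := ie.const_mul (x^2)
    have i2 := ixe.const_mul (-(2*x))
    have i3 := ix2
    have i4 := icos.const_mul (a*x*Real.sin (b*x))
    have i5 := isin.const_mul (-(a*x*Real.cos (b*x)))
    have i6 := ixcos.const_mul (-(a*Real.sin (b*x)))
    have i7 := ixsin.const_mul (a*Real.cos (b*x))
    have j2 : Integrable (fun u : ℝ => x ^ 2 * Real.exp (-c * u ^ 2) + -(2 * x) * (u * Real.exp (-c * u ^ 2))) volume := i1.add i2
    have j3 : Integrable (fun u : ℝ => x ^ 2 * Real.exp (-c * u ^ 2) + -(2 * x) * (u * Real.exp (-c * u ^ 2)) + u ^ 2 * Real.exp (-c * u ^ 2)) volume := j2.add i3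
    have j4 : Integrable (fun u : ℝ => x ^ 2 * Real.exp (-c * u ^ 2) + -(2 * x) * (u * Real.exp (-c * u ^ 2)) + u ^ 2 * Real.exp (-c * u ^ 2) + a * x * Real.sin (b * x) * (Real.cos (b * u) * Real.exp (-c * u ^ 2))) volume := j3.add i4
    have j5 : Integrable (fun u : ℝ => x ^ 2 * Real.exp (-c * u ^ 2) + -(2 * x) * (u * Real.exp (-c * u ^ 2)) + u ^ 2 * Real.exp (-c * u ^ 2) + a * x * Real.sin (b * x) * (Real.cos (b * u) * Real.exp (-c * u ^ 2)) + -(a * x * Real.cos (b * x)) * (Real.sin (b * u) * Real.exp (-c * u ^ 2))) volume := j4.add i5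
    have j6 : Integrable (fun u : ℝ => x ^ 2 * Real.exp (-c * u ^ 2) + -(2 * x) * (u * Real.exp (-c * u ^ 2)) + u ^ 2 * Real.exp (-c * u ^ 2) + a * x * Real.sin (b * x) * (Real.cos (b * u) * Real.exp (-c * u ^ 2)) + -(a * x * Real.cos (b * x)) * (Real.sin (b * u) * Real.exp (-c * u ^ 2)) + -(a * Real.sin (b * x)) * (Real.cos (b * u) * (u * Real.exp (-c * u ^ 2)))) volume := j5.add i6
    have j7 : Integrable (fun u : ℝ => x ^ 2 * Real.exp (-c * u ^ 2) + -(2 * x) * (u * Real.exp (-c * u ^ 2)) + u ^ 2 * Real.exp (-c * u ^ 2) + a * x * Real.sin (b * x) * (Real.cos (b * u) * Real.exp (-c * u ^ 2)) + -(a * x * Real.cos (b * x)) * (Real.sin (b * u) * Real.exp (-c * u ^ 2)) + -(a * Real.sin (b * x)) * (Real.cos (b * u) * (u * Real.exp (-c * u ^ 2))) + a * Real.cos (b * x) * (Real.sin (b * u) * (u * Real.exp (-c * u ^ 2)))) volume := j6.add i7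
    rw [integral_const_mul,
      integral_add j6 i7,
      integral_add j5 i6,
      integral_add j4 i5,
      integral_add j3 i4,
      integral_add j2 i3,
      integral_add i1 i2]
    simp only [integral_const_mul]
    have hoddxe : ∫ u : ℝ, u * Real.exp (-c*u^2) = 0 := by
      apply odd_integral_zero
      intro u; rw [neg_sq]; ring
    have hoddsin : ∫ u : ℝ, Real.sin (b*u) * Real.exp (-c*u^2) = 0 := by
      apply odd_integral_zero
      intro u; rw [neg_sq, mul_neg, Real.sin_neg]; ring
    have hoddxcos : ∫ u : ℝ, Real.cos (b*u) * (u * Real.exp (-c*u^2)) = 0 := by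
      apply odd_integral_zero
      intro u; rw [neg_sq, mul_neg, Real.cos_neg]; ring
    rw [integral_gaussian, integral_sq_mul_gaussian hc, integral_cos_mul_gaussian hc b,
      integral_mul_sin_mul_gaussian hc b, hoddxe, hoddsin, hoddxcos]
    have hπc : π / c = 2*π*V := by rw [hcdef]; field_simp
    have hE : -b^2/(4*c) = -(b^2*V)/2 := by rw [hcdef]; field_simp; ring
    have h2c : (2*c)⁻¹ = V := by rw [hcdef]; field_simp
    have hb2c : b/(2*c) = b*V := by rw [hcdef]; field_simp
    rw [hπc, hE, h2c, hb2c]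
    have hCs : C * Real.sqrt (2*π*V) = 1 := by
      rw [hC]
      exact inv_mul_cancel₀ (ne_of_gt (Real.sqrt_pos.2 (by positivity)))
    linear_combination (x ^ 2 + V + a * Real.exp (-(b ^ 2 * V) / 2) *
      (b * V * Real.cos (b * x) + x * Real.sin (b * x))) * hCs
end

section
/- Equality in expectation for one step: let x₀ ∈ ℝᵈ be fixed, w a zero-mean random vector, and set x₁ = x₀ − γ∇f(x₀) + γw, y₁ = x₀ − γ∇f(x₀) (deterministic), and z₁ = x₀ − γ∇f(x₀ − u) with u = γw' where w' is an independent copy of w. Then E[z₁] = x₀ − γ E_w[∇f(x₀ − γw)] and, defining y'₁ via one SGD step followed by a full-gradient correction as in the paper, E[y'₂] = E[z₂] when the smoothing distribution equals γ times the noise distribution. -/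
open MeasureTheory ProbabilityTheory

/-- Equality in expectation for one step (Kleinberg et al. style): for fixed `x₀`,
zero-mean noise `w` and an independent copy `w'` of `w` (so the smoothing distribution of
`u = γw'` equals `γ` times the noise distribution), the perturbed-GD step
`z₁ = x₀ − γ∇f(x₀ − γw')` satisfies `E[z₁] = x₀ − γ E_w[∇f(x₀ − γw)]`; moreover with
`b = x₀ − γ∇f(x₀)` (the common deterministic first step), the SGD-then-full-gradient
iterate `y'₂ = (b − γw) − γ∇f(b − γw)` and the perturbed-GD iterate
`z₂ = b − γ∇f(b − γw')` agree in expectation: `E[y'₂] = E[z₂]`. -/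
theorem stmt_19 {d : ℕ} (f : EuclideanSpace ℝ (Fin d) → ℝ)
    (hdiff : Differentiable ℝ f) (γ : ℝ)
    {Ω : Type*} [MeasurableSpace Ω] (P : Measure Ω) [IsProbabilityMeasure P]
    (w w' : Ω → EuclideanSpace ℝ (Fin d))
    (hmeas : AEMeasurable w P) (hmeas' : AEMeasurable w' P)
    (hlaw : Measure.map w P = Measure.map w' P)
    (hindep : IndepFun w w' P)
    (hmean : (∫ ω, w ω ∂P) = 0)
    (hIntw : Integrable w P)
    (hInt1 : ∀ c : EuclideanSpace ℝ (Fin d),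
      Integrable (fun ω => gradient f (c - γ • w ω)) P)
    (hInt2 : ∀ c : EuclideanSpace ℝ (Fin d),
      Integrable (fun ω => gradient f (c - γ • w' ω)) P)
    (x₀ b : EuclideanSpace ℝ (Fin d))
    (hb : b = x₀ - γ • gradient f x₀) :
    (∫ ω, (x₀ - γ • gradient f (x₀ - γ • w' ω)) ∂P) =
        x₀ - γ • (∫ ω, gradient f (x₀ - γ • w ω) ∂P) ∧
      (∫ ω, ((b - γ • w ω) - γ • gradient f (b - γ • w ω)) ∂P) =
        (∫ ω, (b - γ • gradient f (b - γ • w' ω)) ∂P) := by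
  have hgradmeas : Measurable (gradient f) := by
    have h1 : Measurable (fderiv ℝ f) := measurable_fderiv ℝ f
    have : gradient f = fun x =>
        (InnerProductSpace.toDual ℝ (EuclideanSpace ℝ (Fin d))).symm (fderiv ℝ f x) := by
      funext x; rfl
    rw [this]
    exact (InnerProductSpace.toDual ℝ (EuclideanSpace ℝ (Fin d))).symm.continuous.measurable.comp h1
  have key : ∀ c : EuclideanSpace ℝ (Fin d),
      (∫ ω, gradient f (c - γ • w' ω) ∂P) = (∫ ω, gradient f (c - γ • w ω) ∂P) := by
    intro c
    have hg : Measurable (fun x : EuclideanSpace ℝ (Fin d) => gradient f (c - γ • x)) :=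
      hgradmeas.comp ((measurable_const.sub (measurable_id.const_smul γ)))
    rw [← integral_map hmeas' hg.aestronglyMeasurable,
        ← hlaw, integral_map hmeas hg.aestronglyMeasurable]
  constructor
  · rw [integral_sub (integrable_const _) (show Integrable (fun ω => γ • gradient f (x₀ - γ • w' ω)) P from (hInt2 x₀).smul γ), integral_const,
      probReal_univ, one_smul, integral_smul, key]
  · rw [integral_sub (show Integrable (fun ω => b - γ • w ω) P from (integrable_const b).sub (hIntw.smul γ)) (show Integrable (fun ω => γ • gradient f (b - γ • w ω)) P from (hInt1 b).smul γ),
      integral_sub (integrable_const b) (show Integrable (fun ω => γ • w ω) P from hIntw.smul γ),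
      integral_sub (integrable_const _) (show Integrable (fun ω => γ • gradient f (b - γ • w' ω)) P from (hInt2 b).smul γ),
      integral_const, probReal_univ, one_smul,
      integral_smul, integral_smul, integral_smul, hmean, smul_zero, sub_zero, key]
end
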